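/- Let (A,μ,η) be a monoid in M and let N be an object of M. The following are equivalent: (i) there exists a morphism r : (A⊗N)⊗A → A⊗N making A⊗N an A-bimodule whose left A-action is μ⊗N, i.e. r satisfies r∘((A⊗N)⊗η) = id_{A⊗N}, r∘((A⊗N)⊗μ) = r∘(r⊗A), and r∘((μ⊗N)⊗A) = (μ⊗N)∘(A⊗r); (ii) there exists a morphism 𝔪 : N⊗A → A⊗N satisfying 𝔪∘(N⊗μ) = (μ⊗N)∘(A⊗𝔪)∘(𝔪⊗A) and 𝔪∘(N⊗η) = η⊗N. -/
import Mathlib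


open CategoryTheory MonoidalCategory

/-- Lemma 1.12: for a monoid `(A, μ, η)` and an object `N`, the existence of an
`A`-bimodule structure on `A ⊗ N` whose left action is `μ ▷ N` is equivalent to the
existence of an entwining `N ⊗ A ⟶ A ⊗ N`. -/
theorem stmt_3 {M : Type*} [Category M] [MonoidalCategory M]
    (A N : M) (μ : A ⊗ A ⟶ A) (η : 𝟙_ M ⟶ A)
    (hassoc : (μ ▷ A) ≫ μ = (α_ A A A).hom ≫ (A ◁ μ) ≫ μ)
    (hunit_l : (η ▷ A) ≫ μ = (λ_ A).hom)
    (hunit_r : (A ◁ η) ≫ μ = (ρ_ A).hom) :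
    (∃ r : (A ⊗ N) ⊗ A ⟶ A ⊗ N,
        ((A ⊗ N) ◁ η) ≫ r = (ρ_ (A ⊗ N)).hom ∧
        ((A ⊗ N) ◁ μ) ≫ r = (α_ (A ⊗ N) A A).inv ≫ (r ▷ A) ≫ r ∧
        ((μ ▷ N) ▷ A) ≫ r =
          ((α_ A A N).hom ▷ A) ≫ (α_ A (A ⊗ N) A).hom ≫ (A ◁ r) ≫
            (α_ A A N).inv ≫ (μ ▷ N)) ↔
    (∃ m : N ⊗ A ⟶ A ⊗ N,
        (N ◁ μ) ≫ m =
          (α_ N A A).inv ≫ (m ▷ A) ≫ (α_ A N A).hom ≫ (A ◁ m) ≫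
            (α_ A A N).inv ≫ (μ ▷ N) ∧
        (N ◁ η) ≫ m = (ρ_ N).hom ≫ (λ_ N).inv ≫ (η ▷ N)) := by
  constructor
  · rintro ⟨r, hr1, hr2, hr3⟩
    refine ⟨(((λ_ N).inv ≫ (η ▷ N)) ▷ A) ≫ r, ?_, ?_⟩
    · -- associativity of the entwining
      have key : (α_ A N A).hom ≫ (A ◁ ((((λ_ N).inv ≫ (η ▷ N)) ▷ A) ≫ r)) ≫
          (α_ A A N).inv ≫ (μ ▷ N) = r := by
        calc (α_ A N A).hom ≫ (A ◁ ((((λ_ N).inv ≫ (η ▷ N)) ▷ A) ≫ r)) ≫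
              (α_ A A N).inv ≫ (μ ▷ N)
            = ((((ρ_ A).inv ≫ (A ◁ η)) ▷ N) ▷ A) ≫ ((α_ A A N).hom ▷ A) ≫
                (α_ A (A ⊗ N) A).hom ≫ (A ◁ r) ≫ (α_ A A N).inv ≫ (μ ▷ N) := by monoidal
          _ = ((((ρ_ A).inv ≫ (A ◁ η)) ▷ N) ▷ A) ≫ ((μ ▷ N) ▷ A) ≫ r := by rw [← hr3]
          _ = ((((ρ_ A).inv ≫ ((A ◁ η) ≫ μ)) ▷ N) ▷ A) ≫ r := by
              simp only [comp_whiskerRight, Category.assoc]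
          _ = r := by rw [hunit_r]; simp
      calc (N ◁ μ) ≫ ((((λ_ N).inv ≫ (η ▷ N)) ▷ A) ≫ r)
          = ((N ◁ μ) ≫ (((λ_ N).inv ≫ (η ▷ N)) ▷ A)) ≫ r := by rw [Category.assoc]
          _ = ((((λ_ N).inv ≫ (η ▷ N)) ▷ (A ⊗ A)) ≫ ((A ⊗ N) ◁ μ)) ≫ r := by
              rw [whisker_exchange]
          _ = (((λ_ N).inv ≫ (η ▷ N)) ▷ (A ⊗ A)) ≫ (α_ (A ⊗ N) A A).inv ≫ (r ▷ A) ≫ r := by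
              rw [Category.assoc, hr2]
          _ = (α_ N A A).inv ≫ ((((λ_ N).inv ≫ (η ▷ N)) ▷ A) ▷ A) ≫ (r ▷ A) ≫ r := by
              monoidal
          _ = (α_ N A A).inv ≫ (((((λ_ N).inv ≫ (η ▷ N)) ▷ A) ≫ r) ▷ A) ≫
                ((α_ A N A).hom ≫ (A ◁ ((((λ_ N).inv ≫ (η ▷ N)) ▷ A) ≫ r)) ≫
                  (α_ A A N).inv ≫ (μ ▷ N)) := by
              rw [key]; simp only [comp_whiskerRight, Category.assoc]
          _ = (α_ N A A).inv ≫ (((((λ_ N).inv ≫ (η ▷ N)) ▷ A) ≫ r) ▷ A) ≫ (α_ A N A).hom ≫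
                (A ◁ ((((λ_ N).inv ≫ (η ▷ N)) ▷ A) ≫ r)) ≫ (α_ A A N).inv ≫ (μ ▷ N) := by
              simp only [Category.assoc]
    · calc (N ◁ η) ≫ ((((λ_ N).inv ≫ (η ▷ N)) ▷ A) ≫ r)
            = ((N ◁ η) ≫ (((λ_ N).inv ≫ (η ▷ N)) ▷ A)) ≫ r := by rw [Category.assoc]
          _ = (((λ_ N).inv ≫ (η ▷ N)) ▷ (𝟙_ M)) ≫ ((A ⊗ N) ◁ η) ≫ r := by
              rw [whisker_exchange, Category.assoc]
          _ = (((λ_ N).inv ≫ (η ▷ N)) ▷ (𝟙_ M)) ≫ (ρ_ (A ⊗ N)).hom := by rw [hr1]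
          _ = (ρ_ N).hom ≫ (λ_ N).inv ≫ (η ▷ N) := by monoidal
  · rintro ⟨m, h1, h2⟩
    refine ⟨(α_ A N A).hom ≫ (A ◁ m) ≫ (α_ A A N).inv ≫ (μ ▷ N), ?_, ?_, ?_⟩
    · -- unit axiom
      calc ((A ⊗ N) ◁ η) ≫ (α_ A N A).hom ≫ (A ◁ m) ≫ (α_ A A N).inv ≫ (μ ▷ N)
          = (α_ A N (𝟙_ M)).hom ≫ (A ◁ ((N ◁ η) ≫ m)) ≫ (α_ A A N).inv ≫ (μ ▷ N) := by
            monoidal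
        _ = (α_ A N (𝟙_ M)).hom ≫ (A ◁ ((ρ_ N).hom ≫ (λ_ N).inv ≫ (η ▷ N))) ≫
              (α_ A A N).inv ≫ (μ ▷ N) := by rw [h2]
        _ = (ρ_ (A ⊗ N)).hom ≫ ((ρ_ A).inv ▷ N) ≫ (((A ◁ η) ≫ μ) ▷ N) := by monoidal
        _ = (ρ_ (A ⊗ N)).hom := by rw [hunit_r]; simp
    · -- associativity axiom
      calc ((A ⊗ N) ◁ μ) ≫ (α_ A N A).hom ≫ (A ◁ m) ≫ (α_ A A N).inv ≫ (μ ▷ N)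
          = (α_ A N (A ⊗ A)).hom ≫ (A ◁ ((N ◁ μ) ≫ m)) ≫ (α_ A A N).inv ≫ (μ ▷ N) := by
            monoidal
        _ = (α_ A N (A ⊗ A)).hom ≫ (A ◁ ((α_ N A A).inv ≫ (m ▷ A) ≫ (α_ A N A).hom ≫
              (A ◁ m) ≫ (α_ A A N).inv ≫ (μ ▷ N))) ≫ (α_ A A N).inv ≫ (μ ▷ N) := by rw [h1]
        _ = (α_ (A ⊗ N) A A).inv ≫ ((α_ A N A).hom ▷ A) ≫ ((A ◁ m) ▷ A) ≫
              ((α_ A A N).inv ▷ A) ≫ (α_ (A ⊗ A) N A).hom ≫ ((A ⊗ A) ◁ m) ≫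
              (α_ (A ⊗ A) A N).inv ≫ (((α_ A A A).hom ≫ (A ◁ μ) ≫ μ) ▷ N) := by monoidal
        _ = (α_ (A ⊗ N) A A).inv ≫ ((α_ A N A).hom ▷ A) ≫ ((A ◁ m) ▷ A) ≫
              ((α_ A A N).inv ▷ A) ≫ (α_ (A ⊗ A) N A).hom ≫ ((A ⊗ A) ◁ m) ≫
              (α_ (A ⊗ A) A N).inv ≫ (((μ ▷ A) ≫ μ) ▷ N) := by rw [← hassoc]
        _ = (α_ (A ⊗ N) A A).inv ≫ ((α_ A N A).hom ▷ A) ≫ ((A ◁ m) ▷ A) ≫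
              ((α_ A A N).inv ▷ A) ≫ (α_ (A ⊗ A) N A).hom ≫
              (((A ⊗ A) ◁ m) ≫ (μ ▷ (A ⊗ N))) ≫ (α_ A A N).inv ≫ (μ ▷ N) := by monoidal
        _ = (α_ (A ⊗ N) A A).inv ≫ ((α_ A N A).hom ▷ A) ≫ ((A ◁ m) ▷ A) ≫
              ((α_ A A N).inv ▷ A) ≫ (α_ (A ⊗ A) N A).hom ≫
              ((μ ▷ (N ⊗ A)) ≫ (A ◁ m)) ≫ (α_ A A N).inv ≫ (μ ▷ N) := by
            rw [whisker_exchange]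
        _ = (α_ (A ⊗ N) A A).inv ≫
              (((α_ A N A).hom ≫ (A ◁ m) ≫ (α_ A A N).inv ≫ (μ ▷ N)) ▷ A) ≫
              (α_ A N A).hom ≫ (A ◁ m) ≫ (α_ A A N).inv ≫ (μ ▷ N) := by monoidal
    · -- compatibility of the two actions
      calc ((μ ▷ N) ▷ A) ≫ (α_ A N A).hom ≫ (A ◁ m) ≫ (α_ A A N).inv ≫ (μ ▷ N)
          = (α_ (A ⊗ A) N A).hom ≫ ((μ ▷ (N ⊗ A)) ≫ (A ◁ m)) ≫ (α_ A A N).inv ≫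
              (μ ▷ N) := by monoidal
        _ = (α_ (A ⊗ A) N A).hom ≫ (((A ⊗ A) ◁ m) ≫ (μ ▷ (A ⊗ N))) ≫ (α_ A A N).inv ≫
              (μ ▷ N) := by rw [whisker_exchange]
        _ = (α_ (A ⊗ A) N A).hom ≫ ((A ⊗ A) ◁ m) ≫ (α_ (A ⊗ A) A N).inv ≫
              (((μ ▷ A) ≫ μ) ▷ N) := by monoidal
        _ = (α_ (A ⊗ A) N A).hom ≫ ((A ⊗ A) ◁ m) ≫ (α_ (A ⊗ A) A N).inv ≫
              (((α_ A A A).hom ≫ (A ◁ μ) ≫ μ) ▷ N) := by rw [hassoc]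
        _ = ((α_ A A N).hom ▷ A) ≫ (α_ A (A ⊗ N) A).hom ≫
              (A ◁ ((α_ A N A).hom ≫ (A ◁ m) ≫ (α_ A A N).inv ≫ (μ ▷ N))) ≫
              (α_ A A N).inv ≫ (μ ▷ N) := by monoidal
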